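/- Let L > 0 and consider the ODE L = 2u̇(t) sin(L/2) / (1 − 2u(t)(1−u(t))(1 − cos(L/2))) on t ∈ [0,1] with u(0)=0. Then the unique solution is u(t) = (1/2)(1 + tan(L(2t−1)/4)/tan(L/4)), and it satisfies u(1) = 1, is strictly increasing, and maps [0,1] bijectively onto [0,1], provided 0 < L < 2π. -/

import Mathlib

open Real Set

private lemma ode_identity_aux (L sθ cθ s4 c4 : ℝ) (hcθ : cθ ≠ 0) (hs4 : s4 ≠ 0) (hc4 : c4 ≠ 0)
    (hpy : sθ^2 + cθ^2 = 1) (hpy4 : s4^2 + c4^2 = 1) :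
    L * (1 - 2 * ((1:ℝ)/2 * (1 + (sθ/cθ) / (s4/c4))) * (1 - (1:ℝ)/2 * (1 + (sθ/cθ) / (s4/c4))) * (1 - (2*c4^2 - 1))) =
    2 * (L / (4 * (s4/c4) * cθ^2)) * (2 * s4 * c4) := by
  field_simp
  linear_combination (4 * L * (2 * (cθ^2 * s4^2 - sθ^2 * c4^2) - 2 * cθ^2 * s4^2)) * hpy4 +
    (8 * L * s4^2 * c4^2) * hpy


/-- **The constant-speed reparametrization ODE for great-circle geodesics.**
For `0 < L < 2π`, the function
`u(t) = (1/2)(1 + tan(L(2t−1)/4)/tan(L/4))`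
solves `L·(1 − 2u(1−u)(1 − cos(L/2))) = 2u̇·sin(L/2)` on `[0,1]` with `u(0) = 0`,
satisfies `u(1) = 1`, is strictly increasing on `[0,1]` and maps `[0,1]`
bijectively onto `[0,1]`; moreover it is the unique such solution with `u(0) = 0`. -/
theorem geodesic_reparametrization_ode
    (L : ℝ) (hL0 : 0 < L) (hL2 : L < 2 * π)
    (u : ℝ → ℝ)
    (hu : u = fun t => (1/2) * (1 + Real.tan (L * (2 * t - 1) / 4) / Real.tan (L / 4))) :
    u 0 = 0 ∧ u 1 = 1 ∧
    (∀ t ∈ Icc (0:ℝ) 1, ∃ d : ℝ, HasDerivAt u d t ∧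
      L * (1 - 2 * u t * (1 - u t) * (1 - Real.cos (L / 2))) = 2 * d * Real.sin (L / 2)) ∧
    StrictMonoOn u (Icc (0:ℝ) 1) ∧
    Set.BijOn u (Icc (0:ℝ) 1) (Icc (0:ℝ) 1) ∧
    (∀ v : ℝ → ℝ, v 0 = 0 →
      (∀ t ∈ Icc (0:ℝ) 1, ∃ d : ℝ, HasDerivAt v d t ∧
        L * (1 - 2 * v t * (1 - v t) * (1 - Real.cos (L / 2))) = 2 * d * Real.sin (L / 2)) →
      ∀ t ∈ Icc (0:ℝ) 1, v t = u t) := by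
  have hπ : 0 < π := Real.pi_pos
  have hL4 : 0 < L / 4 := by linarith
  have hL4' : L / 4 < π / 2 := by linarith
  have hc4 : 0 < Real.cos (L / 4) := Real.cos_pos_of_mem_Ioo ⟨by linarith, hL4'⟩
  have hs4 : 0 < Real.sin (L / 4) := Real.sin_pos_of_pos_of_lt_pi hL4 (by linarith)
  have ha : 0 < Real.tan (L / 4) := by
    rw [Real.tan_eq_sin_div_cos]; exact div_pos hs4 hc4
  have hs2 : 0 < Real.sin (L / 2) := Real.sin_pos_of_pos_of_lt_pi (by linarith) (by linarith)
  have hθmem : ∀ t ∈ Icc (0:ℝ) 1, L * (2 * t - 1) / 4 ∈ Ioo (-(π/2)) (π/2) := by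
    intro t ht
    constructor
    · nlinarith [ht.1, ht.2]
    · nlinarith [ht.1, ht.2]
  have hcθ : ∀ t ∈ Icc (0:ℝ) 1, 0 < Real.cos (L * (2 * t - 1) / 4) := fun t ht =>
    Real.cos_pos_of_mem_Ioo (hθmem t ht)
  have h0 : u 0 = 0 := by
    rw [hu]
    simp only
    rw [show L * (2 * (0:ℝ) - 1) / 4 = -(L/4) by ring, Real.tan_neg]
    field_simp
    norm_num
  have h1 : u 1 = 1 := by
    rw [hu]
    simp only
    rw [show L * (2 * (1:ℝ) - 1) / 4 = L/4 by ring]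
    field_simp
    norm_num
  have hderiv : ∀ t ∈ Icc (0:ℝ) 1,
      HasDerivAt u (L / (4 * Real.tan (L/4) * Real.cos (L * (2*t-1) / 4) ^ 2)) t := by
    intro t ht
    have hin : HasDerivAt (fun t : ℝ => L * (2 * t - 1) / 4) (L / 2) t := by
      have := (((hasDerivAt_id t).const_mul (2:ℝ)).sub_const 1).const_mul L |>.div_const 4
      exact this.congr_deriv (by ring)
    have htan := (Real.hasDerivAt_tan (hcθ t ht).ne').comp t hin
    have := ((htan.div_const (Real.tan (L/4))).const_add 1).const_mul (1/2)
    rw [hu]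
    exact this.congr_deriv (by ring)
  have hode : ∀ t ∈ Icc (0:ℝ) 1,
      L * (1 - 2 * u t * (1 - u t) * (1 - Real.cos (L / 2))) =
      2 * (L / (4 * Real.tan (L/4) * Real.cos (L * (2*t-1) / 4) ^ 2)) * Real.sin (L / 2) := by
    intro t ht
    have hc2 : Real.cos (L/2) = 2 * Real.cos (L/4) ^ 2 - 1 := by
      rw [show (L/2 : ℝ) = 2 * (L/4) by ring, Real.cos_two_mul]
    have hsin2 : Real.sin (L/2) = 2 * Real.sin (L/4) * Real.cos (L/4) := by
      rw [show (L/2 : ℝ) = 2 * (L/4) by ring, Real.sin_two_mul]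
    rw [hu]
    simp only
    rw [hc2, hsin2, Real.tan_eq_sin_div_cos, Real.tan_eq_sin_div_cos]
    linear_combination ode_identity_aux L (Real.sin (L * (2*t-1)/4)) (Real.cos (L * (2*t-1)/4))
      (Real.sin (L/4)) (Real.cos (L/4)) (hcθ t ht).ne' hs4.ne' hc4.ne'
      (Real.sin_sq_add_cos_sq _) (Real.sin_sq_add_cos_sq _)
  have hmono : StrictMonoOn u (Icc (0:ℝ) 1) := by
    intro t1 ht1 t2 ht2 h12
    have htan := Real.strictMonoOn_tan (hθmem t1 ht1) (hθmem t2 ht2)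
      (by nlinarith [ht1.1, ht2.2] : L * (2 * t1 - 1) / 4 < L * (2 * t2 - 1) / 4)
    rw [hu]
    simp only
    gcongr
  have hcont : ContinuousOn u (Icc (0:ℝ) 1) :=
    fun t ht => ((hderiv t ht).continuousAt).continuousWithinAt
  have hmaps : MapsTo u (Icc (0:ℝ) 1) (Icc (0:ℝ) 1) := by
    intro t ht
    have hmo := hmono.monotoneOn
    constructor
    · rw [← h0]; exact hmo (left_mem_Icc.mpr zero_le_one) ht ht.1
    · rw [← h1]; exact hmo ht (right_mem_Icc.mpr zero_le_one) ht.2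
  have hbij : Set.BijOn u (Icc (0:ℝ) 1) (Icc (0:ℝ) 1) := by
    refine ⟨hmaps, hmono.injOn, ?_⟩
    intro y hy
    have := intermediate_value_Icc (zero_le_one) hcont
    rw [h0, h1] at this
    exact this hy
  refine ⟨h0, h1, fun t ht => ⟨_, hderiv t ht, hode t ht⟩, hmono, hbij, ?_⟩
  -- uniqueness
  intro v hv0 hvode
  obtain ⟨F, hFdef⟩ : ∃ F : ℝ → ℝ, ∀ x,
      F x = L * (1 - 2 * x * (1 - x) * (1 - Real.cos (L/2))) / (2 * Real.sin (L/2)) :=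
    ⟨_, fun x => rfl⟩
  have h2s : (2 : ℝ) * Real.sin (L/2) ≠ 0 := by positivity
  have hvd : ∀ t ∈ Icc (0:ℝ) 1, HasDerivAt v (F (v t)) t := by
    intro t ht
    obtain ⟨d, hd, heq⟩ := hvode t ht
    have : F (v t) = d := by
      rw [hFdef, div_eq_iff h2s]
      linarith [heq]
    exact this ▸ hd
  have hud : ∀ t ∈ Icc (0:ℝ) 1, HasDerivAt u (F (u t)) t := by
    intro t ht
    have : F (u t) = L / (4 * Real.tan (L/4) * Real.cos (L * (2*t-1) / 4) ^ 2) := by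
      rw [hFdef, div_eq_iff h2s]
      linarith [hode t ht]
    exact this ▸ hderiv t ht
  have hvc : ContinuousOn v (Icc (0:ℝ) 1) :=
    fun t ht => ((hvd t ht).continuousAt).continuousWithinAt
  obtain ⟨Mv, hMv⟩ := isCompact_Icc.exists_bound_of_continuousOn hvc
  obtain ⟨Mu, hMu⟩ := isCompact_Icc.exists_bound_of_continuousOn hcont
  set M : ℝ := max Mv Mu with hM
  have hM0 : 0 ≤ M :=
    le_trans (norm_nonneg (v 0)) (le_trans (hMv 0 (by norm_num)) (le_max_left _ _))
  have hc1' : Real.cos (L/2) ≤ 1 := Real.cos_le_one _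
  set Kr : ℝ := L * (1 - Real.cos (L/2)) / Real.sin (L/2) * (2 * M + 1) with hKr
  have h3' : 0 ≤ L * (1 - Real.cos (L/2)) / Real.sin (L/2) :=
    div_nonneg (by nlinarith) hs2.le
  have hKr0 : 0 ≤ Kr := mul_nonneg h3' (by linarith)
  have hlip : LipschitzOnWith Kr.toNNReal F (Icc (-M) M) := by
    apply LipschitzOnWith.of_dist_le_mul
    intro x hx y hy
    rw [Real.dist_eq, Real.dist_eq, Real.coe_toNNReal _ hKr0]
    have hFxy : F x - F y =
        L * (1 - Real.cos (L/2)) / Real.sin (L/2) * ((x + y - 1) * (x - y)) := by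
      rw [hFdef, hFdef]
      field_simp
      ring
    rw [hFxy, abs_mul, abs_mul, abs_of_nonneg h3']
    have h2' : |x + y - 1| ≤ 2 * M + 1 := by
      rw [abs_le]
      refine ⟨by linarith [hx.1, hy.1], by linarith [hx.2, hy.2]⟩
    calc L * (1 - Real.cos (L/2)) / Real.sin (L/2) * (|x + y - 1| * |x - y|)
        ≤ L * (1 - Real.cos (L/2)) / Real.sin (L/2) * ((2 * M + 1) * |x - y|) := by
          exact mul_le_mul_of_nonneg_left (mul_le_mul_of_nonneg_right h2' (abs_nonneg _)) h3'
      _ = Kr * |x - y| := by rw [hKr]; ring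
  have hmemv : ∀ t ∈ Ico (0:ℝ) 1, v t ∈ Icc (-M) M := fun t ht =>
    abs_le.mp (le_trans (hMv t (Ico_subset_Icc_self ht)) (le_max_left _ _))
  have hmemu : ∀ t ∈ Ico (0:ℝ) 1, u t ∈ Icc (-M) M := fun t ht =>
    abs_le.mp (le_trans (hMu t (Ico_subset_Icc_self ht)) (le_max_right _ _))
  exact ODE_solution_unique_of_mem_Icc_right
    (v := fun _ x => F x) (s := fun _ => Icc (-M) M)
    (fun _ _ => hlip) hvc
    (fun t ht => (hvd t (Ico_subset_Icc_self ht)).hasDerivWithinAt) hmemv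
    hcont (fun t ht => (hud t (Ico_subset_Icc_self ht)).hasDerivWithinAt) hmemu
    (hv0.trans h0.symm)
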